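/- For b > 0 and 0 < α < β, the integral ∫_0^b (e^{-αx²} − e^{-βx²})/x dx equals (1/2)(Γ(0, b²β) − Γ(0, b²α) + ln(β/α)). -/

import Mathlib

open MeasureTheory

open Set Filter Real intervalIntegral in
private lemma contOn_g {s : Set ℝ} (hs : ∀ t ∈ s, t ≠ 0) :
    ContinuousOn (fun t : ℝ => Real.exp (-t) / t) s :=
  ((Real.continuous_exp.comp continuous_neg).continuousOn).div continuousOn_id hs

open Set Filter Real intervalIntegral in
private lemma integrableOn_g {m : ℝ} (hm : 0 < m) :
    IntegrableOn (fun t : ℝ => Real.exp (-t) / t) (Set.Ioi m) := by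
  have h1 : IntegrableOn (fun t : ℝ => Real.exp (-1 * t) * (1 / m)) (Set.Ioi m) :=
    (exp_neg_integrableOn_Ioi m one_pos).mul_const _
  refine h1.mono' ((contOn_g fun t ht => (hm.trans ht).ne').aestronglyMeasurable
    measurableSet_Ioi) ?_
  filter_upwards [ae_restrict_mem measurableSet_Ioi] with t ht
  have htpos : (0 : ℝ) < t := hm.trans ht
  rw [Real.norm_eq_abs, abs_div, abs_of_pos (Real.exp_pos _), abs_of_pos htpos, neg_one_mul]
  rw [div_eq_mul_one_div]
  exact mul_le_mul_of_nonneg_left (one_div_le_one_div_of_le hm ht.le) (Real.exp_pos _).le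

open Set Filter Real intervalIntegral in
private lemma split_Ioi {m M : ℝ} (hm : 0 < m) (hmM : m ≤ M) :
    ∫ t in Set.Ioi m, Real.exp (-t) / t =
      (∫ t in m..M, Real.exp (-t) / t) + ∫ t in Set.Ioi M, Real.exp (-t) / t := by
  rw [intervalIntegral.integral_of_le hmM]
  rw [← MeasureTheory.setIntegral_union (Set.Ioc_disjoint_Ioi le_rfl) measurableSet_Ioi
      (((integrableOn_g hm).mono_set Set.Ioc_subset_Ioi_self))
      ((integrableOn_g hm).mono_set (Set.Ioi_subset_Ioi hmM)),
    Set.Ioc_union_Ioi_eq_Ioi hmM]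

open Set Filter Real intervalIntegral in
private lemma subst_lemma {a b c : ℝ} (ha : 0 < a) (hab : a ≤ b) (hc : 0 < c) :
    ∫ x in a..b, Real.exp (-(c * x ^ 2)) / x
      = (1 / 2) * ∫ t in (c * a ^ 2)..(c * b ^ 2), Real.exp (-t) / t := by
  have hderiv : ∀ x ∈ Set.uIcc a b, HasDerivAt (fun x : ℝ => c * x ^ 2) (2 * c * x) x := by
    intro x _
    have := (hasDerivAt_pow 2 x).const_mul c
    exact this.congr_deriv (by ring)
  have himg : ∀ t ∈ Set.image (fun x : ℝ => c * x ^ 2) (Set.uIcc a b), t ≠ 0 := by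
    rintro t ⟨x, hx, rfl⟩
    rw [Set.uIcc_of_le hab] at hx
    have hxpos : 0 < x := lt_of_lt_of_le ha hx.1
    positivity
  have hcont : Continuous fun x : ℝ => 2 * c * x := by fun_prop
  have key := intervalIntegral.integral_comp_smul_deriv' hderiv
    hcont.continuousOn (contOn_g himg)
  have hcongr : ∀ x ∈ Set.uIcc a b,
      (2 * c * x) • ((fun t : ℝ => Real.exp (-t) / t) ∘ fun x : ℝ => c * x ^ 2) x
        = 2 * (Real.exp (-(c * x ^ 2)) / x) := by
    intro x hx
    rw [Set.uIcc_of_le hab] at hx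
    have hxpos : 0 < x := lt_of_lt_of_le ha hx.1
    simp only [Function.comp, smul_eq_mul]
    field_simp
  rw [intervalIntegral.integral_congr hcongr, intervalIntegral.integral_const_mul] at key
  linarith [key]

private lemma exp_diff_le {u v : ℝ} (hu : 0 ≤ u) (huv : u ≤ v) :
    Real.exp (-u) - Real.exp (-v) ≤ v - u := by
  have h1 : Real.exp (-v) = Real.exp (-u) * Real.exp (-(v - u)) := by
    rw [← Real.exp_add]; ring_nf
  have h2 : 1 - (v - u) ≤ Real.exp (-(v - u)) := by
    have := Real.add_one_le_exp (-(v - u)); linarith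
  have h3 : Real.exp (-u) ≤ 1 := Real.exp_le_one_iff.mpr (by linarith)
  have h4 : 0 < Real.exp (-u) := Real.exp_pos _
  nlinarith

set_option maxHeartbeats 2000000 in
theorem stmt_6 (b α β : ℝ) (hb : 0 < b) (hα : 0 < α) (hαβ : α < β) :
    ∫ x in Set.Ioc (0 : ℝ) b, (Real.exp (-α * x ^ 2) - Real.exp (-β * x ^ 2)) / x =
      (1 / 2) * ((∫ t in Set.Ioi (b ^ 2 * β), Real.exp (-t) / t) -
        (∫ t in Set.Ioi (b ^ 2 * α), Real.exp (-t) / t) + Real.log (β / α)) := by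
  have hβ : 0 < β := hα.trans hαβ
  set f : ℝ → ℝ := fun x => (Real.exp (-α * x ^ 2) - Real.exp (-β * x ^ 2)) / x with hf
  -- pointwise bound
  have hbound : ∀ x : ℝ, 0 < x → |f x| ≤ (β - α) * x := by
    intro x hx
    have h1 : α * x ^ 2 ≤ β * x ^ 2 := by nlinarith
    have h2 : 0 ≤ α * x ^ 2 := by positivity
    have h3 : Real.exp (-(α * x ^ 2)) - Real.exp (-(β * x ^ 2)) ≤ β * x ^ 2 - α * x ^ 2 :=
      exp_diff_le h2 h1
    have h4 : 0 ≤ Real.exp (-(α * x ^ 2)) - Real.exp (-(β * x ^ 2)) := by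
      have := Real.exp_le_exp.mpr (neg_le_neg h1)
      linarith
    have hfx : f x = (Real.exp (-(α * x ^ 2)) - Real.exp (-(β * x ^ 2))) / x := by
      simp [hf, neg_mul]
    rw [hfx, abs_div, abs_of_nonneg h4, abs_of_pos hx, div_le_iff₀ hx]
    nlinarith
  -- measurability of f
  have hmeas : Measurable f := by
    apply Measurable.div
    · exact ((Real.measurable_exp.comp (measurable_const.mul (measurable_id.pow_const 2))).sub
        (Real.measurable_exp.comp (measurable_const.mul (measurable_id.pow_const 2))))
    · exact measurable_id
  -- integrability of f on Ioc 0 b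
  have hint : IntegrableOn f (Set.Ioc (0 : ℝ) b) := by
    have hconst : IntegrableOn (fun _ : ℝ => (β - α) * b) (Set.Ioc (0:ℝ) b) :=
      integrableOn_const measure_Ioc_lt_top.ne
    refine hconst.mono' (hmeas.aestronglyMeasurable) ?_
    filter_upwards [ae_restrict_mem measurableSet_Ioc] with x hx
    calc ‖f x‖ ≤ (β - α) * x := hbound x hx.1
    _ ≤ (β - α) * b := by nlinarith [hx.2, hαβ]
  set L : ℝ := ∫ x in Set.Ioc (0 : ℝ) b, f x with hL
  set Φ : ℝ → ℝ := fun a => ∫ x in Set.Ioc a b, f x with hΦ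
  -- Claim A : Φ → L as a → 0⁺
  have claimA : Filter.Tendsto Φ (nhdsWithin 0 (Set.Ioi 0)) (nhds L) := by
    have hdiff : Filter.Tendsto (fun a => L - Φ a) (nhdsWithin 0 (Set.Ioi 0)) (nhds 0) := by
      apply squeeze_zero_norm' (a := fun a : ℝ => (β - α) * a * a)
      · filter_upwards [Ioo_mem_nhdsGT_of_mem (Set.left_mem_Ico.mpr hb)] with a ha
        have ha0 : 0 < a := ha.1
        have hab : a < b := ha.2
        have hsplit : L = (∫ x in Set.Ioc (0 : ℝ) a, f x) + Φ a := by
          rw [hL, ← MeasureTheory.setIntegral_union (Set.Ioc_disjoint_Ioc_of_le le_rfl) measurableSet_Ioc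
            (hint.mono_set (Set.Ioc_subset_Ioc_right hab.le))
            (hint.mono_set (Set.Ioc_subset_Ioc_left ha0.le)),
            Set.Ioc_union_Ioc_eq_Ioc ha0.le hab.le]
        rw [hsplit]
        have hnorm : ‖(∫ x in Set.Ioc (0 : ℝ) a, f x)‖ ≤ (β - α) * a * a := by
          have h := MeasureTheory.norm_setIntegral_le_of_norm_le_const
            (C := (β - α) * a) (μ := volume) (s := Set.Ioc (0:ℝ) a) (f := f)
            measure_Ioc_lt_top
            (fun x hx => by
              calc ‖f x‖ ≤ (β - α) * x := hbound x hx.1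
              _ ≤ (β - α) * a := by nlinarith [hx.2, hαβ])
          calc ‖(∫ x in Set.Ioc (0 : ℝ) a, f x)‖
              ≤ (β - α) * a * (volume (Set.Ioc (0:ℝ) a)).toReal := h
            _ = (β - α) * a * a := by
                rw [Real.volume_Ioc, sub_zero, ENNReal.toReal_ofReal ha0.le]
        rw [add_sub_cancel_right]
        exact hnorm
      · have hcont2 : Continuous fun a : ℝ => (β - α) * a * a := by fun_prop
        have := (hcont2.tendsto 0).mono_left (nhdsWithin_le_nhds :
          nhdsWithin (0:ℝ) (Set.Ioi 0) ≤ nhds 0)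
        simpa using this
    have : Filter.Tendsto (fun a => L - (L - Φ a)) (nhdsWithin 0 (Set.Ioi 0)) (nhds (L - 0)) :=
      tendsto_const_nhds.sub hdiff
    simpa using this
  -- notation for tail integrals
  set Cα : ℝ := ∫ t in Set.Ioi (α * b ^ 2), Real.exp (-t) / t with hCα
  set Cβ : ℝ := ∫ t in Set.Ioi (β * b ^ 2), Real.exp (-t) / t with hCβ
  set J : ℝ → ℝ := fun a => ∫ t in (α * a ^ 2)..(β * a ^ 2), Real.exp (-t) / t with hJ
  -- interval integrability of g on positive intervals
  have hgInt : ∀ p q : ℝ, 0 < p → 0 < q →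
      IntervalIntegrable (fun t : ℝ => Real.exp (-t) / t) volume p q := by
    intro p q hp hq
    apply ContinuousOn.intervalIntegrable
    apply contOn_g
    intro t ht
    rcases Set.mem_uIcc.mp ht with h | h
    · exact (lt_of_lt_of_le hp h.1).ne'
    · exact (lt_of_lt_of_le hq h.1).ne'
  -- Claim B : formula for Φ a
  have claimB : ∀ a : ℝ, a ∈ Set.Ioo (0 : ℝ) b → Φ a = (1 / 2) * (J a + Cβ - Cα) := by
    intro a ha
    have ha0 : 0 < a := ha.1
    have hab : a < b := ha.2
    -- Φ a as interval integral and split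
    have hΦeq : Φ a = (∫ x in a..b, Real.exp (-(α * x ^ 2)) / x)
        - ∫ x in a..b, Real.exp (-(β * x ^ 2)) / x := by
      simp only [hΦ]
      rw [← intervalIntegral.integral_of_le hab.le]
      rw [← intervalIntegral.integral_sub]
      · apply intervalIntegral.integral_congr
        intro x hx
        rw [Set.uIcc_of_le hab.le] at hx
        simp only [hf, neg_mul]
        rw [sub_div]
      all_goals {
        apply ContinuousOn.intervalIntegrable
        apply ContinuousOn.div
        · exact (Real.continuous_exp.comp (by continuity)).continuousOn
        · exact continuousOn_id
        · intro x hx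
          rw [Set.uIcc_of_le hab.le] at hx
          exact (lt_of_lt_of_le ha0 hx.1).ne' }
    rw [hΦeq, subst_lemma ha0 hab.le hα, subst_lemma ha0 hab.le hβ]
    -- now combine interval integrals
    have hpa2 : (0:ℝ) < α * a ^ 2 := by positivity
    have hpb2 : (0:ℝ) < α * b ^ 2 := by positivity
    have hqa2 : (0:ℝ) < β * a ^ 2 := by positivity
    have hqb2 : (0:ℝ) < β * b ^ 2 := by positivity
    have add1 : (∫ t in (α * a ^ 2)..(β * a ^ 2), Real.exp (-t) / t)
        + (∫ t in (β * a ^ 2)..(α * b ^ 2), Real.exp (-t) / t)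
        = ∫ t in (α * a ^ 2)..(α * b ^ 2), Real.exp (-t) / t :=
      intervalIntegral.integral_add_adjacent_intervals
        (hgInt _ _ hpa2 hqa2) (hgInt _ _ hqa2 hpb2)
    have add2 : (∫ t in (β * a ^ 2)..(α * b ^ 2), Real.exp (-t) / t)
        + (∫ t in (α * b ^ 2)..(β * b ^ 2), Real.exp (-t) / t)
        = ∫ t in (β * a ^ 2)..(β * b ^ 2), Real.exp (-t) / t :=
      intervalIntegral.integral_add_adjacent_intervals
        (hgInt _ _ hqa2 hpb2) (hgInt _ _ hpb2 hqb2)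
    have hm : α * b ^ 2 ≤ β * b ^ 2 := by nlinarith
    have hsplit := split_Ioi hpb2 hm
    rw [← hCα, ← hCβ] at hsplit
    have : (∫ t in (α * b ^ 2)..(β * b ^ 2), Real.exp (-t) / t) = Cα - Cβ := by linarith
    simp only [hJ]
    linarith
  -- Claim C : J → log (β/α)
  have claimC : Filter.Tendsto J (nhdsWithin 0 (Set.Ioi 0)) (nhds (Real.log (β / α))) := by
    have hJeq : ∀ a : ℝ, a ∈ Set.Ioo (0:ℝ) b → J a = Real.log (β / α)
        - ∫ t in (α * a ^ 2)..(β * a ^ 2), (1 - Real.exp (-t)) / t := by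
      intro a ha
      have ha0 : 0 < a := ha.1
      have hpa2 : (0:ℝ) < α * a ^ 2 := by positivity
      have hqa2 : (0:ℝ) < β * a ^ 2 := by positivity
      have h1int : IntervalIntegrable (fun t : ℝ => 1 / t) volume (α * a ^ 2) (β * a ^ 2) := by
        apply ContinuousOn.intervalIntegrable
        apply ContinuousOn.div continuousOn_const continuousOn_id
        intro t ht
        rw [Set.uIcc_of_le (by nlinarith : α * a ^ 2 ≤ β * a ^ 2)] at ht
        exact (lt_of_lt_of_le hpa2 ht.1).ne'
      have h2int : IntervalIntegrable (fun t : ℝ => (1 - Real.exp (-t)) / t) volume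
          (α * a ^ 2) (β * a ^ 2) := by
        apply ContinuousOn.intervalIntegrable
        apply ContinuousOn.div
        · exact (continuous_const.sub (Real.continuous_exp.comp continuous_neg)).continuousOn
        · exact continuousOn_id
        · intro t ht
          rw [Set.uIcc_of_le (by nlinarith : α * a ^ 2 ≤ β * a ^ 2)] at ht
          exact (lt_of_lt_of_le hpa2 ht.1).ne'
      have hcongr : ∀ t ∈ Set.uIcc (α * a ^ 2) (β * a ^ 2),
          Real.exp (-t) / t = 1 / t - (1 - Real.exp (-t)) / t := by
        intro t ht
        rw [← sub_div]
        ring_nf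
      have h0 : (0:ℝ) ∉ Set.uIcc (α * a ^ 2) (β * a ^ 2) := by
        rw [Set.uIcc_of_le (by nlinarith : α * a ^ 2 ≤ β * a ^ 2)]
        intro h
        exact absurd h.1 (not_le.mpr hpa2)
      have hratio : β * a ^ 2 / (α * a ^ 2) = β / α := by
        rw [mul_div_mul_right _ _ (by positivity : (a:ℝ) ^ 2 ≠ 0)]
      simp only [hJ]
      rw [intervalIntegral.integral_congr hcongr, intervalIntegral.integral_sub h1int h2int]
      congr 1
      rw [integral_one_div h0, hratio]
    have hRtend : Filter.Tendsto
        (fun a : ℝ => ∫ t in (α * a ^ 2)..(β * a ^ 2), (1 - Real.exp (-t)) / t)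
        (nhdsWithin 0 (Set.Ioi 0)) (nhds 0) := by
      apply squeeze_zero_norm' (a := fun a : ℝ => (β - α) * a ^ 2)
      · filter_upwards [Ioo_mem_nhdsGT_of_mem (Set.left_mem_Ico.mpr hb)] with a ha
        have ha0 : 0 < a := ha.1
        have hpa2 : (0:ℝ) < α * a ^ 2 := by positivity
        have hle : α * a ^ 2 ≤ β * a ^ 2 := by nlinarith
        have := intervalIntegral.norm_integral_le_of_norm_le_const
          (C := 1) (f := fun t : ℝ => (1 - Real.exp (-t)) / t)
          (a := α * a ^ 2) (b := β * a ^ 2) ?_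
        · calc ‖∫ t in (α * a ^ 2)..(β * a ^ 2), (1 - Real.exp (-t)) / t‖
              ≤ 1 * |β * a ^ 2 - α * a ^ 2| := this
            _ = (β - α) * a ^ 2 := by
                rw [one_mul, abs_of_nonneg (by nlinarith)]; ring
        · intro t ht
          rw [Set.uIoc_of_le hle] at ht
          have ht0 : 0 < t := hpa2.trans ht.1
          have h5 : 1 - Real.exp (-t) ≤ t := by
            have := Real.add_one_le_exp (-t); linarith
          have h6 : 0 ≤ 1 - Real.exp (-t) := by
            have : Real.exp (-t) ≤ 1 := Real.exp_le_one_iff.mpr (by linarith)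
            linarith
          rw [Real.norm_eq_abs, abs_div, abs_of_nonneg h6, abs_of_pos ht0, div_le_one ht0]
          exact h5
      · have hcont3 : Continuous fun a : ℝ => (β - α) * a ^ 2 := by fun_prop
        have := (hcont3.tendsto 0).mono_left (nhdsWithin_le_nhds :
          nhdsWithin (0:ℝ) (Set.Ioi 0) ≤ nhds 0)
        simpa using this
    have : Filter.Tendsto
        (fun a : ℝ => Real.log (β / α)
          - ∫ t in (α * a ^ 2)..(β * a ^ 2), (1 - Real.exp (-t)) / t)
        (nhdsWithin 0 (Set.Ioi 0)) (nhds (Real.log (β / α) - 0)) :=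
      tendsto_const_nhds.sub hRtend
    rw [sub_zero] at this
    apply this.congr'
    filter_upwards [Ioo_mem_nhdsGT_of_mem (Set.left_mem_Ico.mpr hb)] with a ha
    exact (hJeq a ha).symm
  -- combine
  have claimA' : Filter.Tendsto Φ (nhdsWithin 0 (Set.Ioi 0))
      (nhds ((1 / 2) * (Real.log (β / α) + Cβ - Cα))) := by
    have h1 : Filter.Tendsto (fun a => (1 / 2) * (J a + Cβ - Cα)) (nhdsWithin 0 (Set.Ioi 0))
        (nhds ((1 / 2) * (Real.log (β / α) + Cβ - Cα))) :=
      tendsto_const_nhds.mul ((claimC.add tendsto_const_nhds).sub tendsto_const_nhds)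
    apply h1.congr'
    filter_upwards [Ioo_mem_nhdsGT_of_mem (Set.left_mem_Ico.mpr hb)] with a ha
    exact (claimB a ha).symm
  have hLeq : L = (1 / 2) * (Real.log (β / α) + Cβ - Cα) := by
    have hne : (nhdsWithin (0:ℝ) (Set.Ioi 0)).NeBot := nhdsGT_neBot 0
    exact tendsto_nhds_unique claimA claimA'
  show L = _
  rw [hLeq, hCα, hCβ, mul_comm (b ^ 2) β, mul_comm (b ^ 2) α]
  ring
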